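/- (Stepsize lower bound.) Let {R_k} be a WANBB trajectory satisfying both the sufficient-decrease condition E_{k+1} ≤ B_k − c·α_k·‖F_k‖_F² and the curvature condition ⟨F_{k+1}, F_k⟩ ≤ σ‖F_k‖_F² for all k, where c > 0 and σ ∈ (0,1). Suppose F is Lipschitz continuous with modulus L > 0 on the level set L := {R ∈ V : E(R) ≤ E_0}, i.e., ‖F(R) − F(R̄)‖_F ≤ L‖R − R̄‖_F for all R, R̄ ∈ L. Then for every k with F_k ≠ 0 the stepsize satisfies α_k ≥ (1 − σ)/L. -/

import Mathlib

open scoped RealInnerProductSpace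

/-- Stepsize lower bound: under the sufficient-decrease and curvature conditions,
with `F` Lipschitz (modulus `L`) on the level set, every stepsize with nonzero
force satisfies `α k ≥ (1 - σ) / L`. -/
theorem wanbb_stepsize_lower_bound
    {V : Type*} [NormedAddCommGroup V] [InnerProductSpace ℝ V] [CompleteSpace V]
    (E : V → ℝ) (hE : Differentiable ℝ E)
    (F : V → V) (hF : ∀ x, F x = -gradient E x)
    (R : ℕ → V) (α μ B Q : ℕ → ℝ) (c σ L : ℝ)
    (hc : 0 < c) (hσ : σ ∈ Set.Ioo (0 : ℝ) 1) (hL : 0 < L)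
    (hα : ∀ k, 0 < α k)
    (hstep : ∀ k, R (k + 1) = R k + α k • F (R k))
    (hμ : ∀ k, μ k ∈ Set.Icc (0 : ℝ) 1)
    (hB0 : B 0 = E (R 0)) (hQ0 : Q 0 = 1)
    (hBrec : ∀ k, B (k + 1) = (B k + μ k * Q k * E (R (k + 1))) / (1 + μ k * Q k))
    (hQrec : ∀ k, Q (k + 1) = 1 + μ k * Q k)
    (hdec : ∀ k, E (R (k + 1)) ≤ B k - c * α k * ‖F (R k)‖ ^ 2)
    (hcurv : ∀ k, ⟪F (R (k + 1)), F (R k)⟫ ≤ σ * ‖F (R k)‖ ^ 2)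
    (hLip : ∀ x ∈ {y : V | E y ≤ E (R 0)}, ∀ z ∈ {y : V | E y ≤ E (R 0)},
      ‖F x - F z‖ ≤ L * ‖x - z‖) :
    ∀ k, F (R k) ≠ 0 → (1 - σ) / L ≤ α k := by
  obtain ⟨hσ0, hσ1⟩ := hσ
  have hQ : ∀ k, 0 ≤ Q k := by
    intro k; induction k with
    | zero => rw [hQ0]; norm_num
    | succ n ih => rw [hQrec]; have := (hμ n).1; positivity
  have key : ∀ k, B k ≤ E (R 0) ∧ E (R k) ≤ E (R 0) := by
    intro k; induction k with
    | zero => exact ⟨le_of_eq hB0, le_refl _⟩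
    | succ n ih =>
      have hμQ : 0 ≤ μ n * Q n := mul_nonneg (hμ n).1 (hQ n)
      have hE1 : E (R (n+1)) ≤ B n := by
        have h1 := hdec n
        have hαn := hα n
        have h2 : 0 ≤ c * α n * ‖F (R n)‖ ^ 2 := by positivity
        linarith
      have hE1' : E (R (n+1)) ≤ E (R 0) := hE1.trans ih.1
      refine ⟨?_, hE1'⟩
      rw [hBrec]
      rw [div_le_iff₀ (by linarith)]
      nlinarith [ih.1]
  intro k hFk
  have hF0 : (0:ℝ) < ‖F (R k)‖ := norm_pos_iff.mpr hFk
  have hlip := hLip (R k) (key k).2 (R (k+1)) (key (k+1)).2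
  have hd : R k - R (k+1) = -(α k • F (R k)) := by rw [hstep k]; abel
  have hstepn : ‖R k - R (k+1)‖ = α k * ‖F (R k)‖ := by
    rw [hd, norm_neg, norm_smul, Real.norm_eq_abs, abs_of_pos (hα k)]
  have h1 : (1 - σ) * ‖F (R k)‖ ^ 2 ≤ ⟪F (R k) - F (R (k+1)), F (R k)⟫ := by
    rw [inner_sub_left, real_inner_self_eq_norm_sq]
    have := hcurv k
    nlinarith
  have h2 : ⟪F (R k) - F (R (k+1)), F (R k)⟫ ≤ L * α k * ‖F (R k)‖ * ‖F (R k)‖ := by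
    calc ⟪F (R k) - F (R (k+1)), F (R k)⟫
        ≤ ‖F (R k) - F (R (k+1))‖ * ‖F (R k)‖ := real_inner_le_norm _ _
      _ ≤ (L * ‖R k - R (k+1)‖) * ‖F (R k)‖ :=
          mul_le_mul_of_nonneg_right hlip (norm_nonneg _)
      _ = L * α k * ‖F (R k)‖ * ‖F (R k)‖ := by rw [hstepn]; ring
  have h3 : (1 - σ) * ‖F (R k)‖ ^ 2 ≤ (L * α k) * ‖F (R k)‖ ^ 2 := by nlinarith
  have h4 := (mul_le_mul_iff_of_pos_right (pow_pos hF0 2)).mp h3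
  rw [div_le_iff₀ hL]
  linarith
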